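/- Let φ : F_n → F_{2n} be the homomorphism between free groups sending the i-th generator x_i to the commutator [x_{2i}, x_{2i+1}] (0 ≤ i < n). The image of φ is root-closed: if u ∈ F_{2n} and u^k lies in the image of φ for some nonzero integer k, then u lies in the image of φ. -/

import Mathlib

open scoped commutatorElement

/-- The homomorphism `F_n → F_{2n}` sending the `i`-th generator `xᵢ` to the
commutator `⁅x_{2i}, x_{2i+1}⁆`. -/
noncomputable def phi (n : ℕ) : FreeGroup (Fin n) →* FreeGroup (Fin (2 * n)) :=
  FreeGroup.lift fun i =>
    ⁅FreeGroup.of (⟨2 * (i : ℕ), by have := i.isLt; omega⟩ : Fin (2 * n)),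
     FreeGroup.of (⟨2 * (i : ℕ) + 1, by have := i.isLt; omega⟩ : Fin (2 * n))⁆

open FreeGroup List


variable {n : ℕ}

def ei (n : ℕ) (i : Fin n) : Fin (2*n) := ⟨2*(i:ℕ), by have := i.isLt; omega⟩
def oi (n : ℕ) (i : Fin n) : Fin (2*n) := ⟨2*(i:ℕ)+1, by have := i.isLt; omega⟩

def blk (n : ℕ) (i : Fin n) : Bool → List (Fin (2*n) × Bool)
  | true => [(ei n i, true), (oi n i, true), (ei n i, false), (oi n i, false)]
  | false => [(oi n i, true), (ei n i, true), (oi n i, false), (ei n i, false)]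

lemma blk_length (i : Fin n) (b : Bool) : (blk n i b).length = 4 := by
  cases b <;> simp [blk]

inductive BW (n : ℕ) : List (Fin (2*n) × Bool) → Prop
  | nil : BW n []
  | cons (i : Fin n) (b : Bool) {w} : BW n w → BW n (blk n i b ++ w)

lemma BW.length_dvd {w} (h : BW n w) : 4 ∣ w.length := by
  induction h with
  | nil => simp
  | cons i b hw ih => simpa [blk_length] using Nat.dvd_add (Dvd.intro 1 rfl) ih

lemma BW.sign {w} (h : BW n w) : ∀ p (hp : p < w.length), (w[p]).2 = decide (p % 4 < 2) := by
  induction h with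
  | nil => intro p hp; simp at hp
  | @cons i b w hw ih =>
    intro p hp
    have hlen : p < 4 + w.length := by rw [List.length_append, blk_length] at hp; omega
    rcases b with _ | _ <;>
    · simp only [blk] at *
      match p, hlen with
      | 0, _ => rfl
      | 1, _ => rfl
      | 2, _ => rfl
      | 3, _ => rfl
      | (q+4), hl =>
        have h1 : (q+4) % 4 = q % 4 := by omega
        simp only [List.cons_append, List.getElem_cons_succ, h1]
        exact ih q (by omega)

lemma BW.parity {w} (h : BW n w) : ∀ p (hp : p + 1 < w.length), p % 2 = 0 →
    ((w[p]'(by omega)).1 : ℕ) % 2 ≠ ((w[p+1]).1 : ℕ) % 2 := by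
  induction h with
  | nil => intro p hp; simp at hp
  | @cons i b w hw ih =>
    intro p hp hpe
    have hlen : p + 1 < 4 + w.length := by rw [List.length_append, blk_length] at hp; omega
    rcases b with _ | _ <;>
    · simp only [blk] at *
      rcases p with _ | _ | _ | _ | q
      · simp only [List.cons_append, List.getElem_cons_succ, List.getElem_cons_zero, ei, oi]
        omega
      · omega
      · simp only [List.cons_append, List.getElem_cons_succ, List.getElem_cons_zero, ei, oi]
        omega
      · omega
      · simp only [List.cons_append, List.getElem_cons_succ]
        exact ih q (by omega) (by omega)

/-- positional version of `BW` -/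
def BWp (n : ℕ) (w : List (Fin (2*n) × Bool)) : Prop :=
  4 ∣ w.length ∧ ∀ j, 4*j+4 ≤ w.length → ∃ i b, (w.drop (4*j)).take 4 = blk n i b

lemma BW.to_BWp {w} (h : BW n w) : BWp n w := by
  induction h with
  | nil => exact ⟨by simp, by intro j hj; simp at hj⟩
  | @cons i b w hw ih =>
    constructor
    · simpa [blk_length] using Nat.dvd_add (Dvd.intro 1 rfl) ih.1
    · intro j hj
      rcases j with _ | j
      · refine ⟨i, b, ?_⟩
        simp only [Nat.mul_zero, List.drop_zero]
        rw [show (4:ℕ) = (blk n i b).length from (blk_length i b).symm, List.take_left]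
      · have hd : (blk n i b ++ w).drop (4*(j+1)) = w.drop (4*j) := by
          rw [show 4*(j+1) = (blk n i b).length + 4*j by rw [blk_length]; ring, List.drop_length_add_append]
        rw [hd]
        exact ih.2 j (by rw [List.length_append, blk_length] at hj; omega)

lemma BWp.to_BW : ∀ (N : ℕ) (w : List (Fin (2*n) × Bool)), w.length ≤ N → BWp n w → BW n w := by
  intro N
  induction N with
  | zero =>
    intro w hw _
    have hwnil : w = [] := List.eq_nil_of_length_eq_zero (by omega)
    subst hwnil; exact BW.nil
  | succ N ih =>
    intro w hw hp
    rcases w with _ | ⟨x, w'⟩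
    · exact BW.nil
    · set w := x :: w' with hwdef
      have hlen : 4 ≤ w.length := by
        have := hp.1
        have : w.length ≠ 0 := by simp [hwdef]
        omega
      obtain ⟨i, b, hib⟩ := hp.2 0 (by omega)
      simp only [Nat.mul_zero, List.drop_zero] at hib
      have hsplit : w = blk n i b ++ w.drop 4 := by
        conv_lhs => rw [← List.take_append_drop 4 w]
        rw [hib]
      rw [hsplit]
      refine BW.cons i b (ih (w.drop 4) ?_ ⟨?_, ?_⟩)
      · simp; omega
      · have := hp.1; simp; omega
      · intro j hj
        have : (w.drop 4).drop (4*j) = w.drop (4*(j+1)) := by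
          rw [List.drop_drop]; ring_nf
        rw [this]
        exact hp.2 (j+1) (by simp at hj; omega)

lemma take4_drop_eq {A B C : List (Fin (2*n) × Bool)} {m : ℕ} (h : m + 4 ≤ A.length) :
    ((A ++ B).drop m).take 4 = ((A ++ C).drop m).take 4 := by
  rw [List.drop_append_of_le_length (by omega), List.drop_append_of_le_length (by omega),
    List.take_append_of_le_length (by simp; omega),
    List.take_append_of_le_length (by simp; omega)]

lemma BWp.del {s v r : List (Fin (2*n) × Bool)} (hv : v ≠ []) (h4 : 4 ∣ v.length)
    (h : BWp n (s ++ (v ++ (v ++ r)))) : BWp n (s ++ (v ++ r)) := by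
  obtain ⟨q, hq⟩ := h4
  have hL : v.length ≠ 0 := by simpa using hv
  have hlen₁ : (s ++ (v ++ (v ++ r))).length = s.length + 2*v.length + r.length := by
    simp; ring
  have hlen₂ : (s ++ (v ++ r)).length = s.length + v.length + r.length := by simp; ring
  constructor
  · have := h.1; omega
  · intro j hj
    by_cases hc : 4*j + 4 ≤ s.length + v.length
    · have e1 : ((s ++ (v ++ r)).drop (4*j)).take 4
          = (((s ++ v) ++ (v ++ r)).drop (4*j)).take 4 := by
        rw [← List.append_assoc]
        exact take4_drop_eq (by simp; omega)
      rw [e1, List.append_assoc]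
      exact h.2 j (by omega)
    · have hjs : s.length ≤ 4*j := by omega
      have e1 : (s ++ (v ++ r)).drop (4*j) = (v ++ r).drop (4*j - s.length) := by
        conv_lhs => rw [show 4*j = s.length + (4*j - s.length) by omega]
        rw [List.drop_length_add_append]
      have e2 : (s ++ (v ++ (v ++ r))).drop (4*(j+q)) = (v ++ r).drop (4*j - s.length) := by
        rw [← List.append_assoc, show 4*(j+q) = (s ++ v).length + (4*j - s.length) by
          simp; omega, List.drop_length_add_append]
      rw [e1, ← e2]
      exact h.2 (j+q) (by omega)

lemma BWp.del_pow : ∀ (m : ℕ) {s v t : List (Fin (2*n) × Bool)}, v ≠ [] → 4 ∣ v.length →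
    BWp n (s ++ ((List.replicate m v).flatten ++ t)) → 1 ≤ m → BWp n (s ++ (v ++ t)) := by
  intro m
  induction m with
  | zero => omega
  | succ m ih =>
    intro s v t hv h4 h hm
    rcases Nat.eq_or_lt_of_le hm with hm1 | hm2
    · rw [← hm1] at h
      simpa using h
    · have hm' : 1 ≤ m := by omega
      have hrep : (List.replicate (m+1) v).flatten = v ++ (List.replicate m v).flatten := by
        rw [List.replicate_succ, List.flatten_cons]
      rw [hrep] at h
      have hrep2 : (List.replicate m v).flatten = v ++ (List.replicate (m-1) v).flatten := by
        conv_lhs => rw [show m = (m-1)+1 by omega]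
        rw [List.replicate_succ, List.flatten_cons]
      apply ih hv h4 ?_ hm'
      rw [hrep2] at h ⊢
      simp only [List.append_assoc] at h ⊢
      exact BWp.del hv h4 h

lemma four_dvd_core {s v r w : List (Fin (2*n) × Bool)} (hw : BW n w)
    (hsplit : w = s ++ (v ++ (v ++ r))) (hv : v ≠ []) : 4 ∣ v.length := by
  subst hsplit
  set M := s.length with hM
  set L := v.length with hL
  have hL1 : 1 ≤ L := by
    have : L ≠ 0 := by simpa [hL] using hv
    omega
  have hlen : (s ++ (v ++ (v ++ r))).length = M + 2*L + r.length := by simp; ring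
  have key : ∀ j, (hj : j < L) → ∀ (h1 : M + j < (s ++ (v ++ (v ++ r))).length)
      (h2 : M + L + j < (s ++ (v ++ (v ++ r))).length),
      (s ++ (v ++ (v ++ r)))[M+j] = v[j] ∧ (s ++ (v ++ (v ++ r)))[M+L+j] = v[j] := by
    intro j hj h1 h2
    constructor
    · rw [List.getElem_append_right (by omega : s.length ≤ M + j)]
      rw [List.getElem_append_left (by simp [hL] at hj ⊢; omega)]
      congr 1; omega
    · rw [List.getElem_append_right (by omega : s.length ≤ M + L + j)]
      rw [List.getElem_append_right (by simp [← hL]; omega : v.length ≤ M + L + j - s.length)]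
      rw [List.getElem_append_left (by simp [← hL, ← hM]; omega)]
      congr 1; simp [← hL, ← hM]; omega
  have sgn : ∀ j, j < L → ((M+j) % 4 < 2 ↔ (M+L+j) % 4 < 2) := by
    intro j hj
    have h1 : M + j < (s ++ (v ++ (v ++ r))).length := by omega
    have h2 : M + L + j < (s ++ (v ++ (v ++ r))).length := by omega
    have e1 := hw.sign (M+j) h1
    have e2 := hw.sign (M+L+j) h2
    obtain ⟨k1, k2⟩ := key j hj h1 h2
    rw [k1] at e1; rw [k2] at e2
    have : decide ((M+j) % 4 < 2) = decide ((M+L+j) % 4 < 2) := by rw [← e1, ← e2]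
    simpa using this
  rcases Nat.eq_or_lt_of_le hL1 with hLe | hL2
  · -- L = 1
    exfalso
    have hL' : L = 1 := hLe.symm
    rcases Nat.even_or_odd M with hPar | hPar
    · -- M even: use parity
      have h2 : M + 1 < (s ++ (v ++ (v ++ r))).length := by omega
      have hp := hw.parity M h2 (Nat.even_iff.mp hPar)
      obtain ⟨k1, k2⟩ := key 0 (by omega) (by omega) (by omega)
      simp only [Nat.add_zero, hL'] at k1 k2
      rw [k1, k2] at hp
      exact hp rfl
    · have hsg := sgn 0 (by omega)
      simp only [Nat.add_zero, hL'] at hsg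
      have hodd := Nat.odd_iff.mp hPar
      omega
  · -- L ≥ 2
    have e0 := sgn 0 (by omega)
    have e1 := sgn 1 (by omega)
    simp only [Nat.add_zero] at e0
    omega


abbrev IsRed {α : Type*} (l : List (α × Bool)) : Prop :=
  l.Chain' fun a b => ¬(a.1 = b.1 ∧ a.2 = !b.2)

lemma reduce_eq_self {α : Type*} [DecidableEq α] {l : List (α × Bool)} (h : IsRed l) :
    FreeGroup.reduce l = l := by
  induction l with
  | nil => rfl
  | cons x xs ih =>
    rw [FreeGroup.reduce.cons, ih h.tail]
    cases xs with
    | nil => rfl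
    | cons y ys =>
      have : ¬(x.1 = y.1 ∧ x.2 = !y.2) := (List.isChain_cons_cons.mp h).1
      simp [this]

lemma isRed_reduce {α : Type*} [DecidableEq α] (l : List (α × Bool)) :
    IsRed (FreeGroup.reduce l) := by
  induction l with
  | nil => exact List.isChain_nil
  | cons x xs ih =>
    rw [FreeGroup.reduce.cons]
    cases h : FreeGroup.reduce xs with
    | nil => exact List.isChain_singleton _
    | cons hd tl =>
      rw [h] at ih
      by_cases hc : x.1 = hd.1 ∧ x.2 = !hd.2
      · simp only [hc, if_true, and_self]
        exact ih.tail
      · simp only [hc, if_false]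
        exact List.isChain_cons_cons.mpr ⟨hc, ih⟩

lemma isRed_toWord {α : Type*} [DecidableEq α] (x : FreeGroup α) : IsRed x.toWord := by
  rw [← FreeGroup.reduce_toWord]; exact isRed_reduce _

lemma phi_of (i : Fin n) : phi n (FreeGroup.of i) = FreeGroup.mk (blk n i true) := by
  rw [phi, FreeGroup.lift_apply_of, commutatorElement_def]
  show FreeGroup.mk [(ei n i, true)] * FreeGroup.mk [(oi n i, true)] *
      (FreeGroup.mk [(ei n i, true)])⁻¹ * (FreeGroup.mk [(oi n i, true)])⁻¹ = _
  rw [FreeGroup.inv_mk, FreeGroup.inv_mk, FreeGroup.mul_mk, FreeGroup.mul_mk, FreeGroup.mul_mk]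
  simp [FreeGroup.invRev, blk]

lemma invRev_blk (i : Fin n) (b : Bool) : FreeGroup.invRev (blk n i b) = blk n i (!b) := by
  cases b <;> simp [FreeGroup.invRev, blk]

lemma mk_blk_false (i : Fin n) :
    FreeGroup.mk (blk n i false) = (phi n (FreeGroup.of i))⁻¹ := by
  rw [phi_of, FreeGroup.inv_mk, invRev_blk]
  rfl

lemma BW.mem_range {w} (h : BW n w) : FreeGroup.mk w ∈ (phi n).range := by
  induction h with
  | nil =>
    have : FreeGroup.mk ([] : List (Fin (2*n) × Bool)) = 1 := FreeGroup.one_eq_mk.symm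
    rw [this]; exact one_mem _
  | cons i b hw ih =>
    rw [← FreeGroup.mul_mk]
    refine mul_mem ?_ ih
    cases b
    · rw [mk_blk_false]
      exact inv_mem ⟨FreeGroup.of i, rfl⟩
    · exact ⟨FreeGroup.of i, (phi_of i).symm⟩

lemma isRed_blk (i : Fin n) (b : Bool) : IsRed (blk n i b) := by
  cases b <;>
    simp [IsRed, List.Chain', blk, List.isChain_cons_cons, ei, oi, Fin.ext_iff]

lemma step_mul {z : FreeGroup (Fin (2*n))} (i : Fin n) (b : Bool)
    (hz : BW n z.toWord) : BW n (FreeGroup.mk (blk n i b) * z).toWord := by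
  have hred : IsRed z.toWord := isRed_toWord z
  generalize hlz : z.toWord = lz at hz hred
  have hzmk : z = FreeGroup.mk lz := by rw [← hlz, FreeGroup.mk_toWord]
  cases hz with
  | nil =>
    rw [hzmk, FreeGroup.mul_mk, List.append_nil, FreeGroup.toWord_mk,
      reduce_eq_self (isRed_blk i b)]
    have : blk n i b = blk n i b ++ [] := by simp
    rw [this]
    exact BW.cons i b BW.nil
  | @cons j c w hw0 =>
    by_cases hji : j = i ∧ c = !b
    · obtain ⟨rfl, rfl⟩ := hji
      have hcan : FreeGroup.mk (blk n j b) * FreeGroup.mk (blk n j (!b)) = 1 := by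
        rw [← invRev_blk, ← FreeGroup.inv_mk, mul_inv_cancel]
      have hprod : FreeGroup.mk (blk n j b) * z = FreeGroup.mk w := by
        rw [hzmk, ← FreeGroup.mul_mk, ← mul_assoc, hcan, one_mul]
      have hredw : IsRed w := (List.isChain_append.mp hred).2.1
      rw [hprod, FreeGroup.toWord_mk, reduce_eq_self hredw]
      exact hw0
    · have hkey : (FreeGroup.mk (blk n i b) * z).toWord = blk n i b ++ (blk n j c ++ w) := by
        rw [hzmk, FreeGroup.mul_mk, FreeGroup.toWord_mk]
        apply reduce_eq_self
        refine List.isChain_append.mpr ⟨isRed_blk i b, hred, ?_⟩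
        intro x hx y hy
        rcases b with _ | _ <;> rcases c with _ | _ <;>
          simp [blk, ei, oi] at hx hy <;>
          subst hx <;> subst hy <;>
          simp [ei, oi, Fin.ext_iff] <;>
          intro heq <;>
          first
          | omega
          | (have hji' : (j:ℕ) ≠ (i:ℕ) := fun hv => hji ⟨Fin.ext hv, rfl⟩
             omega)
      rw [hkey]
      exact BW.cons i b (BW.cons j c hw0)

lemma range_BW {z : FreeGroup (Fin (2*n))} (hz : z ∈ (phi n).range) : BW n z.toWord := by
  obtain ⟨g, rfl⟩ := hz
  suffices h : ∀ l : List (Fin n × Bool), BW n ((phi n (FreeGroup.mk l)).toWord) by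
    have := h g.toWord
    rwa [FreeGroup.mk_toWord] at this
  intro l
  induction l with
  | nil =>
    rw [show FreeGroup.mk ([] : List (Fin n × Bool)) = 1 from FreeGroup.one_eq_mk.symm,
      _root_.map_one, FreeGroup.toWord_one]
    exact BW.nil
  | cons p l ih =>
    obtain ⟨i, b⟩ := p
    have hsplit : FreeGroup.mk ((i,b) :: l) = FreeGroup.mk [(i,b)] * FreeGroup.mk l := by
      rw [FreeGroup.mul_mk]; rfl
    rw [hsplit, _root_.map_mul]
    cases b
    · have h1 : FreeGroup.mk [(i,false)] = (FreeGroup.of i)⁻¹ := by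
        rw [show FreeGroup.of i = FreeGroup.mk [(i,true)] from rfl, FreeGroup.inv_mk]
        simp [FreeGroup.invRev]
      rw [h1, _root_.map_inv, phi_of, FreeGroup.inv_mk, invRev_blk]
      exact step_mul i false ih
    · rw [show FreeGroup.mk [(i,true)] = FreeGroup.of i from rfl, phi_of]
      exact step_mul i true ih

lemma flatten_rep_succ {α : Type*} (m : ℕ) (v : List α) :
    (List.replicate (m+1) v).flatten = v ++ (List.replicate m v).flatten := by
  rw [List.replicate_succ, List.flatten_cons]

lemma head?_append_left {α : Type*} {l : List α} (l₂ : List α) (h : l ≠ []) :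
    (l ++ l₂).head? = l.head? := by
  cases l with
  | nil => exact absurd rfl h
  | cons a t => rfl

lemma head?_flatten_rep {α : Type*} {m : ℕ} (v : List α) (hv : v ≠ []) (hm : 1 ≤ m) :
    ((List.replicate m v).flatten).head? = v.head? := by
  obtain ⟨m', rfl⟩ : ∃ m', m = m' + 1 := ⟨m-1, by omega⟩
  rw [flatten_rep_succ]
  exact head?_append_left _ hv

lemma getLast?_flatten_rep {α : Type*} {m : ℕ} (v : List α) (hv : v ≠ []) (hm : 1 ≤ m) :
    ((List.replicate m v).flatten).getLast? = v.getLast? := by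
  obtain ⟨m', rfl⟩ : ∃ m', m = m' + 1 := ⟨m-1, by omega⟩
  rw [List.replicate_succ', List.flatten_append]
  have h1 : ([v] : List (List α)).flatten = v := by simp
  rw [h1, List.getLast?_append_of_ne_nil _ hv]

lemma isRed_flatten_rep {v : List (Fin (2*n) × Bool)} (hv : v ≠ []) (hred : IsRed v)
    (hcyc : ∀ x ∈ v.getLast?, ∀ y ∈ v.head?, ¬(x.1 = y.1 ∧ x.2 = !y.2)) (m : ℕ) :
    IsRed ((List.replicate m v).flatten) := by
  induction m with
  | zero => simp [IsRed, List.Chain']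
  | succ m ih =>
    rw [flatten_rep_succ]
    refine List.isChain_append.mpr ⟨hred, ih, ?_⟩
    intro x hx y hy
    rcases Nat.eq_zero_or_pos m with hm | hm
    · subst hm; simp at hy
    · rw [head?_flatten_rep v hv hm] at hy
      exact hcyc x hx y hy

lemma decomp : ∀ (N : ℕ) (u : FreeGroup (Fin (2*n))), u.toWord.length ≤ N → u ≠ 1 →
    ∃ s v : List (Fin (2*n) × Bool), v ≠ [] ∧
      u = FreeGroup.mk (s ++ (v ++ FreeGroup.invRev s)) ∧
      ∀ m : ℕ, 1 ≤ m →
        (u ^ m).toWord = s ++ ((List.replicate m v).flatten ++ FreeGroup.invRev s) := by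
  intro N
  induction N with
  | zero =>
    intro u hlen hu
    exact absurd (FreeGroup.toWord_eq_nil_iff.mp (List.eq_nil_of_length_eq_zero (by omega))) hu
  | succ N ih =>
    intro u hlen hu
    have hred : IsRed u.toWord := isRed_toWord u
    by_cases hcyc : ∀ x ∈ u.toWord.getLast?, ∀ y ∈ u.toWord.head?, ¬(x.1 = y.1 ∧ x.2 = !y.2)
    · have hvne : u.toWord ≠ [] := fun h => hu (FreeGroup.toWord_eq_nil_iff.mp h)
      refine ⟨[], u.toWord, hvne, ?_, ?_⟩
      · simp [FreeGroup.invRev, FreeGroup.mk_toWord]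
      · intro m hm
        have h1 : u ^ m = FreeGroup.mk ((List.replicate m u.toWord).flatten) := by
          conv_lhs => rw [← FreeGroup.mk_toWord (x := u)]
          rw [FreeGroup.pow_mk]
        rw [h1, FreeGroup.toWord_mk, reduce_eq_self (isRed_flatten_rep hvne hred hcyc m)]
        simp [FreeGroup.invRev]
    · push_neg at hcyc
      obtain ⟨x₀, hx, y₀, hy, hxy⟩ := hcyc
      cases hw0 : u.toWord with
      | nil => rw [hw0] at hy; simp at hy
      | cons y t =>
        rw [hw0] at hx hy hred
        have hy0 : y = y₀ := by simpa using hy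
        rw [← hy0] at hxy
        have ht : t ≠ [] := by
          rintro rfl
          have hxv : y = x₀ := by simpa using hx
          rw [← hxv] at hxy
          rcases hxy with ⟨-, h2⟩
          cases hb : y.2 <;> rw [hb] at h2 <;> simp at h2
        set x' := t.getLast ht with hx'def
        set mid := t.dropLast with hmiddef
        have hts : mid ++ [x'] = t := List.dropLast_append_getLast ht
        have hxeq : x' = x₀ := by
          rw [← hts] at hx
          have h1 : (y :: (mid ++ [x'])).getLast? = some x' := by
            rw [show y :: (mid ++ [x']) = (y :: mid) ++ [x'] from rfl, List.getLast?_concat]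
          rw [h1] at hx
          simpa using hx
        have hxval : x' = (y.1, !y.2) := by
          rw [hxeq]
          exact Prod.ext hxy.1 hxy.2
        have hredt : IsRed (mid ++ [x']) := by rw [hts]; exact hred.tail
        have hmid_red : IsRed mid := (List.isChain_append.mp hredt).1
        have hmid_ne : mid ≠ [] := by
          rintro hmid
          rw [hmid, List.nil_append] at hts
          rw [← hts] at hred
          have hpair : ¬(y.1 = x'.1 ∧ y.2 = !x'.2) := (List.isChain_cons_cons.mp hred).1
          apply hpair
          rw [hxval]
          exact ⟨rfl, by cases y.2 <;> rfl⟩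
        set u' : FreeGroup (Fin (2*n)) := FreeGroup.mk mid with hu'def
        have hmidw : u'.toWord = mid := by rw [hu'def, FreeGroup.toWord_mk, reduce_eq_self hmid_red]
        have hu'ne : u' ≠ 1 := fun h => hmid_ne (by rw [← hmidw, h, FreeGroup.toWord_one])
        have hlen' : u'.toWord.length ≤ N := by
          have h1 : t.length = mid.length + 1 := by rw [← hts]; simp
          have h2 : u.toWord.length = t.length + 1 := by rw [hw0]; simp
          rw [hmidw]; omega
        obtain ⟨s', v, hvne, hu'eq, hpow'⟩ := ih u' hlen' hu'ne
        have hmid_eq : mid = s' ++ (v ++ FreeGroup.invRev s') := by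
          have h1 := hpow' 1 le_rfl
          rw [pow_one, hmidw] at h1
          simpa using h1
        have hinvy : FreeGroup.invRev [y] = [x'] := by simp [FreeGroup.invRev, hxval]
        have hinvs : FreeGroup.invRev (y :: s') = FreeGroup.invRev s' ++ [x'] := by
          simp [FreeGroup.invRev, hxval]
        have hueq : u = FreeGroup.mk [y] * u' * (FreeGroup.mk [y])⁻¹ := by
          rw [FreeGroup.inv_mk, hinvy, hu'def, FreeGroup.mul_mk, FreeGroup.mul_mk]
          conv_lhs => rw [← FreeGroup.mk_toWord (x := u), hw0, ← hts]
          rfl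
        refine ⟨y :: s', v, hvne, ?_, ?_⟩
        · rw [hueq, FreeGroup.inv_mk, hinvy, hu'eq, FreeGroup.mul_mk, FreeGroup.mul_mk]
          congr 1
          simp [hinvs]
        · intro m hm
          have hpowm : u ^ m = FreeGroup.mk ([y] ++ ((u' ^ m).toWord ++ [x'])) := by
            rw [hueq, conj_pow, FreeGroup.inv_mk, hinvy,
              ← FreeGroup.mk_toWord (x := u' ^ m), FreeGroup.mul_mk, FreeGroup.mul_mk]
            congr 1
            simp
          have hcore := hpow' m hm
          have hcore_red : IsRed ((u' ^ m).toWord) := isRed_toWord _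
          have hhead : (u' ^ m).toWord.head? = mid.head? := by
            rw [hcore, hmid_eq]
            cases hs' : s' with
            | nil =>
              simp only [List.nil_append]
              rw [show FreeGroup.invRev ([] : List (Fin (2*n) × Bool)) = [] from rfl,
                List.append_nil, List.append_nil]
              exact head?_flatten_rep v hvne hm
            | cons a s'' => rfl
          have hlast : (u' ^ m).toWord.getLast? = mid.getLast? := by
            rw [hcore, hmid_eq]
            cases hs' : s' with
            | nil =>
              simp only [List.nil_append]
              rw [show FreeGroup.invRev ([] : List (Fin (2*n) × Bool)) = [] from rfl,
                List.append_nil, List.append_nil]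
              exact getLast?_flatten_rep v hvne hm
            | cons a s'' =>
              have hne : FreeGroup.invRev (a :: s'') ≠ [] := by
                intro hcon
                have := congrArg List.length hcon
                rw [FreeGroup.invRev_length] at this
                simp at this
              rw [← List.append_assoc, ← List.append_assoc,
                List.getLast?_append_of_ne_nil _ hne, List.getLast?_append_of_ne_nil _ hne]
          have hfull : IsRed (y :: ((u' ^ m).toWord ++ [x'])) := by
            refine List.isChain_cons.mpr ⟨?_, ?_⟩
            · intro z hz
              have hcne : (u' ^ m).toWord ≠ [] := by
                intro hcon
                rw [hcon] at hhead
                cases hmidcase : mid with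
                | nil => exact hmid_ne hmidcase
                | cons b mid' => rw [hmidcase] at hhead; simp at hhead
              rw [head?_append_left _ hcne, hhead, ← head?_append_left [x'] hmid_ne] at hz
              exact (List.isChain_cons.mp (by rw [← hts] at hred; exact hred)).1 z hz
            · refine List.isChain_append.mpr ⟨hcore_red, List.isChain_singleton _, ?_⟩
              intro a ha b hb
              obtain rfl : x' = b := by simpa using hb
              rw [hlast] at ha
              have hj := (List.isChain_append.mp hredt).2.2
              exact hj a ha x' (by simp)
          rw [hpowm, FreeGroup.toWord_mk,
            show ([y] ++ ((u' ^ m).toWord ++ [x'])) = y :: ((u' ^ m).toWord ++ [x']) from rfl,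
            reduce_eq_self hfull, hcore, hinvs]
          simp [List.append_assoc]

lemma main_nat (u : FreeGroup (Fin (2*n))) (m : ℕ) (hm : 1 ≤ m)
    (h : u ^ m ∈ (phi n).range) : u ∈ (phi n).range := by
  rcases eq_or_ne u 1 with rfl | hu
  · exact one_mem _
  rcases eq_or_lt_of_le hm with hm1 | hm2
  · rw [← hm1, pow_one] at h; exact h
  · obtain ⟨s, v, hvne, hueq, hpow⟩ := decomp u.toWord.length u le_rfl hu
    have hBW : BW n ((u ^ m).toWord) := range_BW h
    rw [hpow m hm] at hBW
    obtain ⟨m2, rfl⟩ : ∃ m2, m = m2 + 2 := ⟨m - 2, by omega⟩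
    have h4 : 4 ∣ v.length := by
      refine four_dvd_core (s := s)
        (r := (List.replicate m2 v).flatten ++ FreeGroup.invRev s) hBW ?_ hvne
      rw [flatten_rep_succ, flatten_rep_succ]
      simp [List.append_assoc]
    have hdel := BWp.del_pow (m2+2) hvne h4 hBW.to_BWp hm
    have hfin : BW n (s ++ (v ++ FreeGroup.invRev s)) := BWp.to_BW _ _ le_rfl hdel
    rw [hueq]
    exact hfin.mem_range

/-- The image of `φ : F_n → F_{2n}` is root-closed. -/
theorem range_phi_root_closed (n : ℕ) (u : FreeGroup (Fin (2 * n))) (k : ℤ)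
    (hk : k ≠ 0) (h : u ^ k ∈ (phi n).range) :
    u ∈ (phi n).range := by
  have hnat : u ^ (k.natAbs) ∈ (phi n).range := by
    rcases Int.natAbs_eq k with he | he
    · rw [he, zpow_natCast] at h; exact h
    · rw [he, zpow_neg, zpow_natCast] at h
      exact (inv_mem_iff).mp h
  exact main_nat u k.natAbs (Int.natAbs_pos.mpr hk) hnat
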